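/- If G admits a fall-coloring with k colors and k ≥ χ(H), then the Cartesian product G □ H admits a fall-coloring with k colors. -/

import Mathlib

/-- Cartesian (box) product of simple graphs. -/
def cartProd {α β : Type*} (G : SimpleGraph α) (H : SimpleGraph β) : SimpleGraph (α × β) where
  Adj a b := (a.1 = b.1 ∧ H.Adj a.2 b.2) ∨ (G.Adj a.1 b.1 ∧ a.2 = b.2)
  symm := by
    constructor
    rintro a b (⟨h1, h2⟩ | ⟨h1, h2⟩)
    · exact Or.inl ⟨h1.symm, h2.symm⟩
    · exact Or.inr ⟨h1.symm, h2.symm⟩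
  loopless := ⟨by rintro a (⟨-, h⟩ | ⟨h, -⟩) <;> exact h.ne rfl⟩

/-- A fall-coloring with `k` colors: a proper coloring in which every vertex is a b-vertex. -/
def IsFallColoring {α : Type*} (G : SimpleGraph α) (k : ℕ) (f : α → Fin k) : Prop :=
  (∀ ⦃a b⦄, G.Adj a b → f a ≠ f b) ∧
  ∀ a : α, ∀ c : Fin k, c ≠ f a → ∃ b, G.Adj a b ∧ f b = c

theorem stmt17 {α β : Type*} (G : SimpleGraph α) (H : SimpleGraph β) (k : ℕ)
    (f : α → Fin k) (hf : IsFallColoring G k f)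
    (hchi : H.chromaticNumber ≤ (k : ℕ∞)) :
    ∃ g : α × β → Fin k, IsFallColoring (cartProd G H) k g := by
  obtain ⟨c⟩ := (SimpleGraph.chromaticNumber_le_iff_colorable.mp hchi)
  rcases Nat.eq_zero_or_pos k with hk | hk
  · subst hk
    refine ⟨fun p => f p.1, ?_, ?_⟩
    · intro a b hab
      exact (f a.1).elim0
    · intro a
      exact (f a.1).elim0
  · haveI : NeZero k := ⟨hk.ne'⟩
    refine ⟨fun p => f p.1 + c p.2, ?_, ?_⟩
    · dsimp only
      rintro a b (⟨h1, h2⟩ | ⟨h1, h2⟩)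
      · rw [h1]
        intro h
        exact c.valid h2 (add_left_cancel h)
      · rw [h2]
        intro h
        exact hf.1 h1 (add_right_cancel h)
    · dsimp only
      intro a d hd
      have hne : d - c a.2 ≠ f a.1 := by
        intro h
        apply hd
        rw [← h]; simp
      obtain ⟨b, hab, hb⟩ := hf.2 a.1 (d - c a.2) hne
      refine ⟨(b, a.2), Or.inr ⟨hab, rfl⟩, ?_⟩
      simp [hb]
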